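/- Let 0 < α < 1 and ξ ∈ ℝ with ξ ≠ 0. Then the integral ∫_ℝ (1 − cos(ξζ))·|ζ|^{α−2} dζ is absolutely convergent and equals −2 sin(πα/2)·Γ(α−1)·|ξ|^{1−α}. (Note Γ(α−1) < 0 for 0 < α < 1, so the right-hand side is positive; this computes the symbol b₁(ξ) = 2 sin(πα/2)Γ(α−1)|ξ|^{1−α} of the linear operator L₁ for the GSQG front equations with 0 < α < 1.) -/

import Mathlib

open MeasureTheory

section AuxLemmas

open Set Real Filter

private lemma aux14_integral_exp_neg_mul_Ioi {r : ℝ} (hr : 0 < r) :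
    ∫ v in Ioi (0:ℝ), Real.exp (-(r * v)) = 1 / r := by
  have h := Real.integral_rpow_mul_exp_neg_mul_Ioi (a := 1) one_pos hr
  simpa using h

private lemma aux14_integrableOn_exp_neg_mul_cos {s : ℝ} (hs : 0 < s) :
    IntegrableOn (fun t : ℝ => Real.exp (-(s * t)) * Real.cos t) (Ioi 0) := by
  refine ((exp_neg_integrableOn_Ioi 0 hs).mono' ?_ ?_)
  · exact (Continuous.mul (by continuity) Real.continuous_cos).aestronglyMeasurable
  · filter_upwards with t
    rw [Real.norm_eq_abs, abs_mul, abs_of_pos (Real.exp_pos _), neg_mul]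
    calc Real.exp (-(s*t)) * |Real.cos t| ≤ Real.exp (-(s*t)) * 1 := by
          gcongr; exact Real.abs_cos_le_one t
      _ = Real.exp (-s * t) := by rw [mul_one, neg_mul]
    exact le_of_eq (by rw [neg_mul])

private lemma aux14_laplace_cos {s : ℝ} (hs : 0 < s) :
    ∫ t in Ioi (0:ℝ), Real.exp (-(s * t)) * Real.cos t = s / (1 + s ^ 2) := by
  have h1s : (0:ℝ) < 1 + s ^ 2 := by positivity
  set F : ℝ → ℝ := fun t => Real.exp (-(s * t)) * (Real.sin t - s * Real.cos t) / (1 + s ^ 2)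
  have hderiv : ∀ t ∈ Ici (0:ℝ), HasDerivAt F (Real.exp (-(s * t)) * Real.cos t) t := by
    intro t _
    have h1 : HasDerivAt (fun t : ℝ => Real.exp (-(s * t))) (-s * Real.exp (-(s * t))) t := by
      have : HasDerivAt (fun t : ℝ => -(s * t)) (-s) t := by
        exact ((hasDerivAt_id t).const_mul s).neg.congr_deriv (by ring)
      simpa [mul_comm] using this.exp
    have h2 : HasDerivAt (fun t : ℝ => Real.sin t - s * Real.cos t)
        (Real.cos t + s * Real.sin t) t := by
      exact
        ((Real.hasDerivAt_sin t).sub ((Real.hasDerivAt_cos t).const_mul s)).congr_deriv (by ring)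
    have := (h1.mul h2).div_const (1 + s ^ 2)
    refine this.congr_deriv ?_
    rw [div_eq_iff h1s.ne']
    ring
  have htend : Tendsto F atTop (nhds 0) := by
    have hb : Tendsto (fun t : ℝ => Real.exp (-(s * t))) atTop (nhds 0) := by
      rw [show (fun t : ℝ => Real.exp (-(s*t))) = fun t : ℝ => Real.exp (-(s*t)) from rfl]
      apply Real.tendsto_exp_atBot.comp
      exact tendsto_neg_atBot_iff.mpr (tendsto_id.const_mul_atTop hs)
    have : Tendsto (fun t : ℝ => Real.exp (-(s*t)) * ((1 + s)/(1 + s^2))) atTop (nhds 0) := by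
      simpa using hb.mul_const ((1 + s)/(1 + s^2))
    apply squeeze_zero_norm _ this
    intro t
    rw [Real.norm_eq_abs]
    have hnum : |Real.sin t - s * Real.cos t| ≤ 1 + s := by
      calc |Real.sin t - s * Real.cos t| ≤ |Real.sin t| + |s * Real.cos t| := abs_sub _ _
        _ ≤ 1 + s := by
            rw [abs_mul, abs_of_pos hs]
            gcongr
            · exact Real.abs_sin_le_one t
            · calc s * |Real.cos t| ≤ s * 1 := by gcongr; exact Real.abs_cos_le_one t
                _ = s := mul_one s
    calc |F t| = Real.exp (-(s*t)) * |Real.sin t - s * Real.cos t| / (1 + s^2) := by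
          rw [abs_div, abs_of_pos h1s, abs_mul, abs_of_pos (Real.exp_pos _)]
      _ ≤ Real.exp (-(s*t)) * (1 + s) / (1 + s^2) := by gcongr
      _ = Real.exp (-(s*t)) * ((1 + s)/(1 + s^2)) := by ring
  have := integral_Ioi_of_hasDerivAt_of_tendsto' hderiv
    (aux14_integrableOn_exp_neg_mul_cos hs) htend
  rw [this]
  simp only [F, mul_zero, neg_zero, Real.exp_zero, Real.sin_zero, Real.cos_zero, one_mul,
    mul_one, zero_sub]
  field_simp

private lemma aux14_integrableOn_one_sub_cos_exp {s : ℝ} (hs : 0 < s) :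
    IntegrableOn (fun t : ℝ => (1 - Real.cos t) * Real.exp (-(s * t))) (Ioi 0) := by
  have h1 : IntegrableOn (fun t : ℝ => Real.exp (-(s * t))) (Ioi 0) := by
    simpa [neg_mul] using exp_neg_integrableOn_Ioi 0 hs
  have hsub : IntegrableOn
      (fun t : ℝ => Real.exp (-(s * t)) - Real.exp (-(s * t)) * Real.cos t) (Ioi 0) :=
    h1.sub (aux14_integrableOn_exp_neg_mul_cos hs)
  refine hsub.congr_fun (fun t _ => by ring) measurableSet_Ioi

private lemma aux14_laplace_one_sub_cos {s : ℝ} (hs : 0 < s) :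
    ∫ t in Ioi (0:ℝ), (1 - Real.cos t) * Real.exp (-(s * t)) = 1 / (s * (1 + s ^ 2)) := by
  have h1 : IntegrableOn (fun t : ℝ => Real.exp (-(s * t))) (Ioi 0) := by
    simpa [neg_mul] using exp_neg_integrableOn_Ioi 0 hs
  have h2 := aux14_integrableOn_exp_neg_mul_cos hs
  have heq : ∀ t : ℝ, (1 - Real.cos t) * Real.exp (-(s * t))
      = Real.exp (-(s * t)) - Real.exp (-(s * t)) * Real.cos t := fun t => by ring
  rw [show (fun t : ℝ => (1 - Real.cos t) * Real.exp (-(s * t)))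
      = fun t => Real.exp (-(s * t)) - Real.exp (-(s * t)) * Real.cos t from funext heq,
    integral_sub h1 h2, aux14_integral_exp_neg_mul_Ioi hs, aux14_laplace_cos hs]
  have h1s : (0:ℝ) < 1 + s ^ 2 := by positivity
  field_simp
  ring

private lemma aux14_integrableOn_rpow_div_one_add_sq {α : ℝ} (h0 : 0 < α) (h1 : α < 1) :
    IntegrableOn (fun s : ℝ => s ^ (-α) / (1 + s ^ 2)) (Ioi 0) := by
  have hmeas : Measurable (fun s : ℝ => s ^ (-α) / (1 + s ^ 2)) := by fun_prop
  have hsplit : Ioi (0:ℝ) = Ioc 0 1 ∪ Ioi 1 := (Ioc_union_Ioi_eq_Ioi zero_le_one).symm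
  rw [hsplit]
  refine IntegrableOn.union ?_ ?_
  · have hint : IntegrableOn (fun s : ℝ => s ^ (-α)) (Ioc (0:ℝ) 1) := by
      have := intervalIntegral.intervalIntegrable_rpow' (a := (0:ℝ)) (b := 1)
        (by linarith : (-1:ℝ) < -α)
      rwa [intervalIntegrable_iff_integrableOn_Ioc_of_le zero_le_one] at this
    refine hint.mono' hmeas.aestronglyMeasurable ?_
    filter_upwards [ae_restrict_mem measurableSet_Ioc] with s hs
    have hs0 : (0:ℝ) < s := hs.1
    rw [Real.norm_eq_abs, abs_of_nonneg (div_nonneg (rpow_nonneg hs0.le _) (by positivity))]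
    calc s ^ (-α) / (1 + s ^ 2) ≤ s ^ (-α) / 1 := by
          gcongr
          nlinarith
      _ = s ^ (-α) := div_one _
  · refine (integrableOn_Ioi_rpow_of_lt (by linarith : -α - 2 < -1) one_pos).mono'
      hmeas.aestronglyMeasurable ?_
    filter_upwards [ae_restrict_mem measurableSet_Ioi] with s hs
    have hs0 : (0:ℝ) < s := lt_trans one_pos hs
    rw [Real.norm_eq_abs, abs_of_nonneg (div_nonneg (rpow_nonneg hs0.le _) (by positivity))]
    have h2 : s ^ (-α - 2) = s ^ (-α) / s ^ 2 := by
      rw [Real.rpow_sub hs0, Real.rpow_two]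
    rw [h2]
    gcongr
    nlinarith

private lemma aux14_integrableOn_one_sub_cos_rpow {α : ℝ} (h0 : 0 < α) (h1 : α < 1) :
    IntegrableOn (fun t : ℝ => (1 - Real.cos t) * t ^ (α - 2)) (Ioi 0) := by
  have hmeas : Measurable (fun t : ℝ => (1 - Real.cos t) * t ^ (α - 2)) := by fun_prop
  have hsplit : Ioi (0:ℝ) = Ioc 0 1 ∪ Ioi 1 := (Ioc_union_Ioi_eq_Ioi zero_le_one).symm
  rw [hsplit]
  refine IntegrableOn.union ?_ ?_
  · have hint : IntegrableOn (fun t : ℝ => t ^ α / 2) (Ioc (0:ℝ) 1) := by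
      have := intervalIntegral.intervalIntegrable_rpow' (a := (0:ℝ)) (b := 1)
        (by linarith : (-1:ℝ) < α)
      rw [intervalIntegrable_iff_integrableOn_Ioc_of_le zero_le_one] at this
      exact this.div_const 2
    refine hint.mono' hmeas.aestronglyMeasurable ?_
    filter_upwards [ae_restrict_mem measurableSet_Ioc] with t ht
    have ht0 : (0:ℝ) < t := ht.1
    have hcos : 0 ≤ 1 - Real.cos t := by linarith [Real.cos_le_one t]
    rw [Real.norm_eq_abs, abs_of_nonneg (mul_nonneg hcos (rpow_nonneg ht0.le _))]
    have hb : 1 - Real.cos t ≤ t ^ 2 / 2 := by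
      have := Real.one_sub_sq_div_two_le_cos (x := t)
      linarith
    calc (1 - Real.cos t) * t ^ (α - 2) ≤ (t ^ 2 / 2) * t ^ (α - 2) := by
          gcongr
      _ = t ^ α / 2 := by
          rw [← Real.rpow_two, div_mul_eq_mul_div, ← Real.rpow_add ht0]
          ring_nf
  · have hint : IntegrableOn (fun t : ℝ => 2 * t ^ (α - 2)) (Ioi (1:ℝ)) :=
      (integrableOn_Ioi_rpow_of_lt (by linarith : α - 2 < -1) one_pos).const_mul 2
    refine hint.mono' hmeas.aestronglyMeasurable ?_
    filter_upwards [ae_restrict_mem measurableSet_Ioi] with t ht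
    have ht0 : (0:ℝ) < t := lt_trans one_pos ht
    have hcos : 0 ≤ 1 - Real.cos t := by linarith [Real.cos_le_one t]
    rw [Real.norm_eq_abs, abs_of_nonneg (mul_nonneg hcos (rpow_nonneg ht0.le _))]
    gcongr
    linarith [Real.neg_one_le_cos t]

private lemma aux14_K_value {α : ℝ} (h0 : 0 < α) (h1 : α < 1) :
    ∫ s in Ioi (0:ℝ), s ^ (-α) / (1 + s ^ 2)
      = 1 / 2 * Real.Gamma ((1 - α) / 2) * Real.Gamma ((1 + α) / 2) := by
  have hq : (-1 : ℝ) < -α := by linarith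
  have hinner : ∀ v : ℝ, 0 < v → ∫ s in Ioi (0:ℝ), s ^ (-α) * Real.exp (-v * s ^ 2)
      = v ^ ((α - 1) / 2) * (1 / 2 * Real.Gamma ((1 - α) / 2)) := by
    intro v hv
    have hcongr : ∀ s ∈ Ioi (0:ℝ), s ^ (-α) * Real.exp (-v * s ^ 2)
        = s ^ (-α) * Real.exp (-v * s ^ (2:ℝ)) := by
      intro s _; rw [Real.rpow_two]
    rw [setIntegral_congr_fun measurableSet_Ioi hcongr,
      integral_rpow_mul_exp_neg_mul_rpow two_pos hq hv,
      show (-(-α + 1) / 2 : ℝ) = (α - 1) / 2 by ring,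
      show ((-α + 1) / 2 : ℝ) = (1 - α) / 2 by ring]
    ring
  have hm : AEStronglyMeasurable
      (Function.uncurry (fun v s : ℝ => Real.exp (-v) * (s ^ (-α) * Real.exp (-v * s ^ 2))))
      ((volume.restrict (Ioi 0)).prod (volume.restrict (Ioi 0))) := by
    apply Measurable.aestronglyMeasurable
    fun_prop
  have hint : Integrable
      (Function.uncurry (fun v s : ℝ => Real.exp (-v) * (s ^ (-α) * Real.exp (-v * s ^ 2))))
      ((volume.restrict (Ioi 0)).prod (volume.restrict (Ioi 0))) := by
    rw [integrable_prod_iff hm]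
    simp only [Function.uncurry_apply_pair]
    constructor
    · filter_upwards [ae_restrict_mem measurableSet_Ioi] with v hv
      exact ((integrableOn_rpow_mul_exp_neg_mul_sq hv hq).const_mul _)
    · apply Integrable.congr
        (f := fun v => (Real.exp (-v) * v ^ ((α + 1) / 2 - 1))
          * (1 / 2 * Real.Gamma ((1 - α) / 2)))
      · exact (Real.GammaIntegral_convergent (by linarith : 0 < (α + 1) / 2)).mul_const _
      · filter_upwards [ae_restrict_mem measurableSet_Ioi] with v hv
        have hn : ∀ s ∈ Ioi (0:ℝ),
            ‖Real.exp (-v) * (s ^ (-α) * Real.exp (-v * s ^ 2))‖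
            = Real.exp (-v) * (s ^ (-α) * Real.exp (-v * s ^ 2)) := fun s hs =>
          Real.norm_of_nonneg (mul_nonneg (Real.exp_pos _).le
            (mul_nonneg (Real.rpow_nonneg (le_of_lt hs) _) (Real.exp_pos _).le))
        show (Real.exp (-v) * v ^ ((α + 1) / 2 - 1)) * (1 / 2 * Real.Gamma ((1 - α) / 2))
          = ∫ s in Ioi (0:ℝ), ‖Real.exp (-v) * (s ^ (-α) * Real.exp (-v * s ^ 2))‖
        rw [setIntegral_congr_fun measurableSet_Ioi hn, integral_const_mul, hinner v hv,
          show ((α + 1) / 2 - 1 : ℝ) = (α - 1) / 2 by ring]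
        ring
  have hswap := integral_integral_swap hint
  have hRHS : (∫ s in Ioi (0:ℝ), ∫ v in Ioi (0:ℝ),
        Real.exp (-v) * (s ^ (-α) * Real.exp (-v * s ^ 2)))
      = ∫ s in Ioi (0:ℝ), s ^ (-α) / (1 + s ^ 2) := by
    apply setIntegral_congr_fun measurableSet_Ioi
    intro s hs
    dsimp only
    have h1s : (0:ℝ) < 1 + s ^ 2 := by positivity
    have hc : ∀ v ∈ Ioi (0:ℝ), Real.exp (-v) * (s ^ (-α) * Real.exp (-v * s ^ 2))
        = s ^ (-α) * Real.exp (-((1 + s ^ 2) * v)) := by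
      intro v _
      rw [← mul_assoc, mul_comm (Real.exp (-v)) _, mul_assoc, ← Real.exp_add]
      ring_nf
    rw [setIntegral_congr_fun measurableSet_Ioi hc, integral_const_mul,
      aux14_integral_exp_neg_mul_Ioi h1s, mul_one_div]
  have hLHS : (∫ v in Ioi (0:ℝ), ∫ s in Ioi (0:ℝ),
        Real.exp (-v) * (s ^ (-α) * Real.exp (-v * s ^ 2)))
      = 1 / 2 * Real.Gamma ((1 - α) / 2) * Real.Gamma ((1 + α) / 2) := by
    have hc : ∀ v ∈ Ioi (0:ℝ), (∫ s in Ioi (0:ℝ),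
          Real.exp (-v) * (s ^ (-α) * Real.exp (-v * s ^ 2)))
        = (v ^ ((1 + α) / 2 - 1) * Real.exp (-(1 * v)))
          * (1 / 2 * Real.Gamma ((1 - α) / 2)) := by
      intro v hv
      rw [integral_const_mul, hinner v hv, one_mul,
        show ((1 + α) / 2 - 1 : ℝ) = (α - 1) / 2 by ring]
      ring
    rw [setIntegral_congr_fun measurableSet_Ioi hc, integral_mul_const,
      Real.integral_rpow_mul_exp_neg_mul_Ioi (by linarith : 0 < (1 + α) / 2) one_pos]
    rw [one_div_one, Real.one_rpow]
    ring
  rw [← hRHS, ← hswap, hLHS]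

private lemma aux14_gamma_eq_K {α : ℝ} (h0 : 0 < α) (h1 : α < 1) :
    Real.Gamma (2 - α) * ∫ t in Ioi (0:ℝ), (1 - Real.cos t) * t ^ (α - 2)
      = ∫ s in Ioi (0:ℝ), s ^ (-α) / (1 + s ^ 2) := by
  have key : ∀ s : ℝ, 0 < s →
      s ^ (1 - α) * (1 / (s * (1 + s ^ 2))) = s ^ (-α) / (1 + s ^ 2) := by
    intro s hs
    have : s ^ (1 - α) = s * s ^ (-α) := by
      rw [show (1 - α : ℝ) = 1 + -α by ring, Real.rpow_add hs, Real.rpow_one]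
    rw [this]
    field_simp
  have hm : AEStronglyMeasurable
      (Function.uncurry (fun s t : ℝ => s ^ (1 - α) * ((1 - Real.cos t) * Real.exp (-(s * t)))))
      ((volume.restrict (Ioi 0)).prod (volume.restrict (Ioi 0))) := by
    apply Measurable.aestronglyMeasurable
    fun_prop
  have hint : Integrable
      (Function.uncurry (fun s t : ℝ => s ^ (1 - α) * ((1 - Real.cos t) * Real.exp (-(s * t)))))
      ((volume.restrict (Ioi 0)).prod (volume.restrict (Ioi 0))) := by
    rw [integrable_prod_iff hm]
    simp only [Function.uncurry_apply_pair]
    constructor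
    · filter_upwards [ae_restrict_mem measurableSet_Ioi] with s hs
      exact ((aux14_integrableOn_one_sub_cos_exp hs).const_mul _)
    · apply Integrable.congr (f := fun s : ℝ => s ^ (-α) / (1 + s ^ 2))
      · exact aux14_integrableOn_rpow_div_one_add_sq h0 h1
      · filter_upwards [ae_restrict_mem measurableSet_Ioi] with s hs
        have hn : ∀ t ∈ Ioi (0:ℝ),
            ‖s ^ (1 - α) * ((1 - Real.cos t) * Real.exp (-(s * t)))‖
            = s ^ (1 - α) * ((1 - Real.cos t) * Real.exp (-(s * t))) := by
          intro t _
          refine Real.norm_of_nonneg (mul_nonneg (Real.rpow_nonneg (le_of_lt hs) _)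
            (mul_nonneg ?_ (Real.exp_pos _).le))
          linarith [Real.cos_le_one t]
        rw [setIntegral_congr_fun measurableSet_Ioi hn, integral_const_mul,
          aux14_laplace_one_sub_cos hs, key s hs]
  have hswap := integral_integral_swap hint
  have hLHS : (∫ s in Ioi (0:ℝ), ∫ t in Ioi (0:ℝ),
        s ^ (1 - α) * ((1 - Real.cos t) * Real.exp (-(s * t))))
      = ∫ s in Ioi (0:ℝ), s ^ (-α) / (1 + s ^ 2) := by
    apply setIntegral_congr_fun measurableSet_Ioi
    intro s hs
    dsimp only
    rw [integral_const_mul, aux14_laplace_one_sub_cos hs, key s hs]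
  have hRHS : (∫ t in Ioi (0:ℝ), ∫ s in Ioi (0:ℝ),
        s ^ (1 - α) * ((1 - Real.cos t) * Real.exp (-(s * t))))
      = Real.Gamma (2 - α) * ∫ t in Ioi (0:ℝ), (1 - Real.cos t) * t ^ (α - 2) := by
    rw [← integral_const_mul]
    apply setIntegral_congr_fun measurableSet_Ioi
    intro t ht
    dsimp only
    have hc : ∀ s ∈ Ioi (0:ℝ), s ^ (1 - α) * ((1 - Real.cos t) * Real.exp (-(s * t)))
        = (1 - Real.cos t) * (s ^ ((2 - α) - 1) * Real.exp (-(t * s))) := by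
      intro s _
      rw [show ((2 - α) - 1 : ℝ) = 1 - α by ring, mul_comm s t]
      ring
    rw [setIntegral_congr_fun measurableSet_Ioi hc, integral_const_mul,
      Real.integral_rpow_mul_exp_neg_mul_Ioi (by linarith : (0:ℝ) < 2 - α) ht]
    have ht0 : (0:ℝ) < t := ht
    have hpow : (1 / t) ^ (2 - α) = t ^ (α - 2) := by
      rw [one_div, ← Real.rpow_neg_one t, ← Real.rpow_mul ht0.le,
        show (-1 * (2 - α) : ℝ) = α - 2 by ring]
    rw [hpow]
    ring
  rw [← hLHS, hswap, hRHS]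

private lemma aux14_final_algebra {α : ℝ} (h0 : 0 < α) (h1 : α < 1) :
    2 * ((1 / 2 * Real.Gamma ((1 - α) / 2) * Real.Gamma ((1 + α) / 2)) / Real.Gamma (2 - α))
      = -2 * Real.sin (Real.pi * α / 2) * Real.Gamma (α - 1) := by
  have hpi := Real.pi_pos
  have hs2 : 0 < Real.sin (Real.pi * α / 2) :=
    Real.sin_pos_of_pos_of_lt_pi (by positivity) (by nlinarith)
  have hc2 : 0 < Real.cos (Real.pi * α / 2) :=
    Real.cos_pos_of_mem_Ioo ⟨by nlinarith, by nlinarith⟩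
  have hsin : Real.sin (Real.pi * α)
      = 2 * Real.sin (Real.pi * α / 2) * Real.cos (Real.pi * α / 2) := by
    have h := Real.sin_two_mul (Real.pi * α / 2)
    rw [show 2 * (Real.pi * α / 2) = Real.pi * α by ring] at h
    exact h
  have hsα : 0 < Real.sin (Real.pi * α) := by rw [hsin]; positivity
  have hG2 : 0 < Real.Gamma (2 - α) := Real.Gamma_pos_of_pos (by linarith)
  have hrefl1 : Real.Gamma ((1 + α) / 2) * Real.Gamma ((1 - α) / 2)
      = Real.pi / Real.cos (Real.pi * α / 2) := by
    have h := Real.Gamma_mul_Gamma_one_sub ((1 + α) / 2)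
    rw [show (1 - (1 + α) / 2 : ℝ) = (1 - α) / 2 by ring] at h
    rw [h]
    congr 1
    rw [show (Real.pi * ((1 + α) / 2) : ℝ) = Real.pi / 2 - (-(Real.pi * α / 2)) by ring,
      Real.sin_pi_div_two_sub, Real.cos_neg]
  have hrefl2 : Real.Gamma (α - 1) * Real.Gamma (2 - α)
      = -(Real.pi / Real.sin (Real.pi * α)) := by
    have h := Real.Gamma_mul_Gamma_one_sub (α - 1)
    rw [show (1 - (α - 1) : ℝ) = 2 - α by ring] at h
    rw [h, show (Real.pi * (α - 1) : ℝ) = Real.pi * α - Real.pi by ring,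
      Real.sin_sub, Real.sin_pi, Real.cos_pi]
    rw [show Real.sin (Real.pi * α) * -1 - Real.cos (Real.pi * α) * 0
        = -Real.sin (Real.pi * α) by ring, div_neg]
  have hG : Real.Gamma (α - 1)
      = -(Real.pi / Real.sin (Real.pi * α)) / Real.Gamma (2 - α) := by
    rw [eq_div_iff hG2.ne']
    exact hrefl2
  rw [mul_assoc (1/2 : ℝ), mul_comm (Real.Gamma ((1 - α) / 2)),
    hrefl1, hG, hsin]
  field_simp

end AuxLemmas

/-- For `0 < α < 1` and `ξ ≠ 0`, the integral
`∫_ℝ (1 − cos(ξζ))·|ζ|^{α−2} dζ` is absolutely convergent and equals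
`−2 sin(πα/2)·Γ(α−1)·|ξ|^{1−α}`. -/
theorem integral_one_sub_cos_mul_abs_rpow (α : ℝ) (h0 : 0 < α) (h1 : α < 1)
    (ξ : ℝ) (hξ : ξ ≠ 0) :
    Integrable (fun ζ : ℝ => (1 - Real.cos (ξ * ζ)) * |ζ| ^ (α - 2)) ∧
    ∫ ζ : ℝ, (1 - Real.cos (ξ * ζ)) * |ζ| ^ (α - 2) =
      -2 * Real.sin (Real.pi * α / 2) * Real.Gamma (α - 1) * |ξ| ^ (1 - α) := by
  classical
  open Set Real in
  have hc : (0:ℝ) < |ξ| := abs_pos.mpr hξ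
  -- the even function g
  have hfI : IntegrableOn (fun t : ℝ => (1 - Real.cos t) * t ^ (α - 2)) (Set.Ioi 0) :=
    aux14_integrableOn_one_sub_cos_rpow h0 h1
  have hgI : Integrable (fun ζ : ℝ => (1 - Real.cos ζ) * |ζ| ^ (α - 2)) := by
    have h1' : IntegrableOn (fun ζ : ℝ => (1 - Real.cos ζ) * |ζ| ^ (α - 2)) (Set.Ioi 0) :=
      hfI.congr_fun (fun x hx => by rw [abs_of_pos hx]) measurableSet_Ioi
    have h2' : IntegrableOn (fun ζ : ℝ => (1 - Real.cos ζ) * |ζ| ^ (α - 2)) (Set.Iic 0) := by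
      rw [← Measure.map_neg_eq_self (volume : Measure ℝ)]
      have m : MeasurableEmbedding fun x : ℝ => -x := (Homeomorph.neg ℝ).measurableEmbedding
      rw [m.integrableOn_map_iff]
      have : ((fun ζ : ℝ => (1 - Real.cos ζ) * |ζ| ^ (α - 2)) ∘ fun x : ℝ => -x)
          = fun ζ : ℝ => (1 - Real.cos ζ) * |ζ| ^ (α - 2) := by
        funext x; simp [Function.comp, Real.cos_neg, abs_neg]
      rw [this]
      have hpre : (fun x : ℝ => -x) ⁻¹' Set.Iic 0 = Set.Ici 0 := by
        ext x; simp
      rw [hpre]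
      exact Iff.mpr integrableOn_Ici_iff_integrableOn_Ioi h1'
    have : IntegrableOn (fun ζ : ℝ => (1 - Real.cos ζ) * |ζ| ^ (α - 2))
        (Set.Iic 0 ∪ Set.Ioi 0) := h2'.union h1'
    rwa [Set.Iic_union_Ioi, integrableOn_univ] at this
  -- value on ℝ for g
  have hgval : (∫ ζ : ℝ, (1 - Real.cos ζ) * |ζ| ^ (α - 2))
      = 2 * ∫ t in Set.Ioi (0:ℝ), (1 - Real.cos t) * t ^ (α - 2) := by
    rw [show (fun ζ : ℝ => (1 - Real.cos ζ) * |ζ| ^ (α - 2))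
        = fun x : ℝ => (1 - Real.cos |x|) * |x| ^ (α - 2) from
      funext (fun x => by rw [Real.cos_abs])]
    exact integral_comp_abs (f := fun t : ℝ => (1 - Real.cos t) * t ^ (α - 2))
  -- scaling identity
  have heq : ∀ ζ : ℝ, (1 - Real.cos (ξ * ζ)) * |ζ| ^ (α - 2)
      = |ξ| ^ (2 - α) * ((1 - Real.cos (|ξ| * ζ)) * |(|ξ| * ζ)| ^ (α - 2)) := by
    intro ζ
    have hcos : Real.cos (ξ * ζ) = Real.cos (|ξ| * ζ) := by
      rw [← Real.cos_abs (ξ * ζ), ← Real.cos_abs (|ξ| * ζ), abs_mul, abs_mul, abs_abs]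
    have habs : |(|ξ| * ζ)| = |ξ| * |ζ| := by rw [abs_mul, abs_abs]
    have hone : |ξ| ^ (2 - α) * |ξ| ^ (α - 2) = 1 := by
      rw [← Real.rpow_add hc, show (2 - α + (α - 2) : ℝ) = 0 by ring, Real.rpow_zero]
    rw [hcos, habs, Real.mul_rpow (abs_nonneg ξ) (abs_nonneg ζ)]
    linear_combination (-((1 - Real.cos (|ξ| * ζ)) * |ζ| ^ (α - 2))) * hone
  have hfun : (fun ζ : ℝ => (1 - Real.cos (ξ * ζ)) * |ζ| ^ (α - 2))
      = fun ζ : ℝ => |ξ| ^ (2 - α)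
        * ((1 - Real.cos (|ξ| * ζ)) * |(|ξ| * ζ)| ^ (α - 2)) := funext heq
  constructor
  · rw [hfun]
    exact ((hgI.comp_mul_left' hc.ne').const_mul _)
  · have hJ : (∫ t in Set.Ioi (0:ℝ), (1 - Real.cos t) * t ^ (α - 2))
        = (1 / 2 * Real.Gamma ((1 - α) / 2) * Real.Gamma ((1 + α) / 2))
          / Real.Gamma (2 - α) := by
      have hG2 : 0 < Real.Gamma (2 - α) := Real.Gamma_pos_of_pos (by linarith)
      rw [eq_div_iff hG2.ne', mul_comm]
      rw [aux14_gamma_eq_K h0 h1, aux14_K_value h0 h1]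
    calc ∫ ζ : ℝ, (1 - Real.cos (ξ * ζ)) * |ζ| ^ (α - 2)
        = ∫ ζ : ℝ, |ξ| ^ (2 - α)
            * ((1 - Real.cos (|ξ| * ζ)) * |(|ξ| * ζ)| ^ (α - 2)) := by rw [hfun]
      _ = |ξ| ^ (2 - α) * ∫ ζ : ℝ,
            (1 - Real.cos (|ξ| * ζ)) * |(|ξ| * ζ)| ^ (α - 2) := integral_const_mul _ _
      _ = |ξ| ^ (2 - α) * (|(|ξ|)⁻¹| • ∫ ζ : ℝ, (1 - Real.cos ζ) * |ζ| ^ (α - 2)) := by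
            rw [MeasureTheory.Measure.integral_comp_mul_left
              (fun ζ : ℝ => (1 - Real.cos ζ) * |ζ| ^ (α - 2)) |ξ|]
      _ = |ξ| ^ (1 - α) * ∫ ζ : ℝ, (1 - Real.cos ζ) * |ζ| ^ (α - 2) := by
            rw [abs_of_pos (inv_pos.mpr hc), smul_eq_mul, ← mul_assoc]
            congr 1
            rw [← Real.rpow_neg_one |ξ|, ← Real.rpow_add hc,
              show (2 - α + -1 : ℝ) = 1 - α by ring]
      _ = -2 * Real.sin (Real.pi * α / 2) * Real.Gamma (α - 1) * |ξ| ^ (1 - α) := by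
            rw [hgval, hJ, ← aux14_final_algebra h0 h1]
            ring
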